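/- In a binary tree-child phylogenetic network with n leaves and h hybrid nodes, the number of tree nodes that have neither a hybrid parent nor a hybrid sibling equals 2n - 2h - 1. -/
import Mathlib


/-- In-degree of a node in a directed graph given by its arc relation. -/
noncomputable def indeg {V : Type} (A : V → V → Prop) (v : V) : ℕ := Nat.card {u : V // A u v}

/-- Out-degree of a node in a directed graph given by its arc relation. -/
noncomputable def outdeg {V : Type} (A : V → V → Prop) (v : V) : ℕ := Nat.card {u : V // A v u}

/-- A leaf: degrees (1,0). -/
def IsLeaf {V : Type} (A : V → V → Prop) (v : V) : Prop :=
  indeg A v = 1 ∧ outdeg A v = 0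

/-- A tree node: degrees (1,0) (leaf), (0,2) (root) or (1,2) (internal tree node). -/
def IsTreeNode {V : Type} (A : V → V → Prop) (v : V) : Prop :=
  (indeg A v = 1 ∧ outdeg A v = 0) ∨ (indeg A v = 0 ∧ outdeg A v = 2) ∨
    (indeg A v = 1 ∧ outdeg A v = 2)

/-- A hybrid node: degrees (2,1). -/
def IsHybrid {V : Type} (A : V → V → Prop) (v : V) : Prop :=
  indeg A v = 2 ∧ outdeg A v = 1

/-- A binary tree-child phylogenetic network on the (finite) node set `V`:
a DAG with a single root, all of whose nodes are tree nodes or hybrid nodes,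
and where every non-leaf node has a child that is a tree node. -/
structure BTC (V : Type) [Finite V] where
  Arc : V → V → Prop
  acyclic : ∀ v : V, ¬ Relation.TransGen Arc v v
  uniqueRoot : ∃! r : V, indeg Arc r = 0
  binary : ∀ v : V, IsTreeNode Arc v ∨ IsHybrid Arc v
  treeChild : ∀ v : V, 0 < outdeg Arc v → ∃ w : V, Arc v w ∧ IsTreeNode Arc w

/-- A tree node has a hybrid parent. -/
def HasHybridParent {V : Type} (A : V → V → Prop) (u : V) : Prop :=
  ∃ w : V, IsHybrid A w ∧ A w u

/-- A node has a hybrid sibling (a hybrid node sharing a parent with it). -/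
def HasHybridSibling {V : Type} (A : V → V → Prop) (u : V) : Prop :=
  ∃ w x : V, IsHybrid A w ∧ w ≠ u ∧ A x u ∧ A x w

section Aux
variable {V : Type} [Finite V]

set_option linter.unusedSectionVars false

lemma card_sub [Fintype V] (p : V → Prop) [DecidablePred p] :
    Nat.card {x // p x} = (Finset.univ.filter p).card := by
  rw [Nat.card_eq_fintype_card, Fintype.card_subtype]

lemma uniq_of_card_one {p : V → Prop} (hp : Nat.card {x // p x} = 1)
    {a b : V} (ha : p a) (hb : p b) : a = b := by
  have hs := (Nat.card_eq_one_iff_unique.mp hp).1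
  have h := @Subsingleton.elim _ hs ⟨a, ha⟩ ⟨b, hb⟩
  exact congrArg Subtype.val h

lemma card_two_elim {p : V → Prop} (hp : Nat.card {x // p x} = 2)
    {a b c : V} (ha : p a) (hb : p b) (hc : p c) (hab : a ≠ b) : c = a ∨ c = b := by
  classical
  letI := Fintype.ofFinite V
  by_contra hcon
  push_neg at hcon
  rw [card_sub] at hp
  have hsub : ({a, b, c} : Finset V) ⊆ Finset.univ.filter p := by
    intro x hx
    simp only [Finset.mem_insert, Finset.mem_singleton] at hx
    rcases hx with rfl | rfl | rfl <;> simp [ha, hb, hc]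
  have h3 : ({a, b, c} : Finset V).card = 3 := by
    rw [Finset.card_insert_of_notMem (by simp [hab, Ne.symm hcon.1]),
      Finset.card_insert_of_notMem (by simp [Ne.symm hcon.2]), Finset.card_singleton]
  have := Finset.card_le_card hsub
  omega

lemma indeg_pos {A : V → V → Prop} {x v : V} (hx : A x v) : 0 < indeg A v := by
  have : Nonempty {u // A u v} := ⟨⟨x, hx⟩⟩
  exact Nat.card_pos

lemma outdeg_pos {A : V → V → Prop} {x v : V} (hx : A x v) : 0 < outdeg A x := by
  have : Nonempty {u // A x u} := ⟨⟨v, hx⟩⟩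
  exact Nat.card_pos

lemma hybrid_not_tree {A : V → V → Prop} {w : V} (hw : IsHybrid A w) : ¬ IsTreeNode A w := by
  obtain ⟨h1, h2⟩ := hw
  rintro (⟨g1, g2⟩ | ⟨g1, g2⟩ | ⟨g1, g2⟩) <;> omega

lemma tree_indeg_one {A : V → V → Prop} {u x : V} (ht : IsTreeNode A u) (hx : A x u) :
    indeg A u = 1 := by
  have := indeg_pos hx
  rcases ht with ⟨h1, _⟩ | ⟨h1, _⟩ | ⟨h1, _⟩ <;> omega

lemma parent_unique {A : V → V → Prop} {u x y : V} (ht : IsTreeNode A u) (hx : A x u)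
    (hy : A y u) : x = y := by
  have h1 : Nat.card {z // A z u} = 1 := tree_indeg_one ht hx
  exact uniq_of_card_one h1 hx hy

lemma hybrid_child_unique {A : V → V → Prop} {w x y : V} (hw : IsHybrid A w) (hx : A w x)
    (hy : A w y) : x = y := by
  have h1 : Nat.card {z // A w z} = 1 := hw.2
  exact uniq_of_card_one h1 hx hy

lemma hybrid_child (N : BTC V) {w : V} (hw : IsHybrid N.Arc w) :
    ∃ u, N.Arc w u ∧ IsTreeNode N.Arc u ∧ ∀ y, N.Arc w y → y = u := by
  obtain ⟨u, hu, htu⟩ := N.treeChild w (by rw [hw.2]; norm_num)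
  exact ⟨u, hu, htu, fun y hy => hybrid_child_unique hw hy hu⟩

lemma hybrid_parent_tree (N : BTC V) {x w : V} (hx : N.Arc x w) (hw : IsHybrid N.Arc w) :
    ¬ IsHybrid N.Arc x ∧ outdeg N.Arc x = 2 := by
  have hpos := outdeg_pos hx
  have hxt : ¬ IsHybrid N.Arc x := by
    intro hxh
    obtain ⟨u, hu, htu, huniq⟩ := hybrid_child N hxh
    exact hybrid_not_tree hw (huniq w hx ▸ htu)
  refine ⟨hxt, ?_⟩
  rcases N.binary x with (⟨h1, h2⟩ | ⟨h1, h2⟩ | ⟨h1, h2⟩) | hh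
  · omega
  · exact h2
  · exact h2
  · exact absurd hh hxt

end Aux


/-- In a binary tree-child network with n leaves and h hybrid nodes, the number
of tree nodes that have neither a hybrid parent nor a hybrid sibling equals
2n - 2h - 1. -/
theorem stmt9 {V : Type} [Finite V] (N : BTC V) (n h : ℕ)
    (hn : n = Nat.card {v : V // IsLeaf N.Arc v})
    (hh : h = Nat.card {v : V // IsHybrid N.Arc v}) :
    (Nat.card {u : V // IsTreeNode N.Arc u ∧ ¬ HasHybridParent N.Arc u ∧
      ¬ HasHybridSibling N.Arc u} : ℤ) = 2 * (n : ℤ) - 2 * (h : ℤ) - 1 := by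
  classical
  letI := Fintype.ofFinite V
  -- root count
  have hroot : Nat.card {v : V // indeg N.Arc v = 0} = 1 := by
    obtain ⟨r, hr, hru⟩ := N.uniqueRoot
    rw [Nat.card_eq_one_iff_unique]
    refine ⟨⟨fun a b => ?_⟩, ⟨⟨r, hr⟩⟩⟩
    obtain ⟨a, ha⟩ := a; obtain ⟨b, hb⟩ := b
    simp only [Subtype.mk.injEq]
    rw [hru a ha, hru b hb]
  -- handshake
  have hhs : ∑ v : V, indeg N.Arc v = ∑ v : V, outdeg N.Arc v := by
    have h1 : ∀ v : V, indeg N.Arc v = (Finset.univ.filter (fun u => N.Arc u v)).card :=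
      fun v => card_sub _
    have h2 : ∀ v : V, outdeg N.Arc v = (Finset.univ.filter (fun u => N.Arc v u)).card :=
      fun v => card_sub _
    simp only [h1, h2, Finset.card_filter]
    exact Finset.sum_comm
  -- pointwise degree identity
  have hpt : ∀ v : V, (outdeg N.Arc v : ℤ) - (indeg N.Arc v : ℤ)
      = 1 - 2 * (if IsLeaf N.Arc v then 1 else 0) - 2 * (if IsHybrid N.Arc v then 1 else 0)
        + (if indeg N.Arc v = 0 then 1 else 0) := by
    intro v
    rcases N.binary v with (⟨h1, h2⟩ | ⟨h1, h2⟩ | ⟨h1, h2⟩) | ⟨h1, h2⟩ <;>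
      simp [IsLeaf, IsHybrid, h1, h2]
  have hsum0 : ∑ v : V, ((outdeg N.Arc v : ℤ) - indeg N.Arc v) = 0 := by
    rw [Finset.sum_sub_distrib]
    have h3 : (∑ v : V, (outdeg N.Arc v : ℤ)) = ∑ v : V, (indeg N.Arc v : ℤ) := by
      exact_mod_cast congrArg (fun k : ℕ => (k : ℤ)) hhs.symm
    rw [h3, sub_self]
  have e1 : ∑ v : V, (if IsLeaf N.Arc v then (1 : ℤ) else 0) = n := by
    rw [Finset.sum_boole, hn, card_sub]
  have e2 : ∑ v : V, (if IsHybrid N.Arc v then (1 : ℤ) else 0) = h := by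
    rw [Finset.sum_boole, hh, card_sub]
  have e3 : ∑ v : V, (if indeg N.Arc v = 0 then (1 : ℤ) else 0) = 1 := by
    rw [Finset.sum_boole, ← card_sub, hroot, Nat.cast_one]
  have hV : (Fintype.card V : ℤ) = 2 * n + 2 * h - 1 := by
    have hc : ∑ v : V, ((outdeg N.Arc v : ℤ) - indeg N.Arc v)
        = (Fintype.card V : ℤ) - 2 * n - 2 * h + 1 := by
      rw [Finset.sum_congr rfl (fun v _ => hpt v)]
      simp only [Finset.sum_add_distrib, Finset.sum_sub_distrib, ← Finset.mul_sum,
        Finset.sum_const, e1, e2, e3, smul_eq_mul, mul_one, Finset.card_univ]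
      ring
    rw [hsum0] at hc
    linarith
  -- tree nodes + hybrids = all
  have hth : Nat.card {v : V // IsTreeNode N.Arc v} + h = Fintype.card V := by
    rw [card_sub, hh, card_sub]
    have hfe : Finset.univ.filter (IsTreeNode N.Arc)
        = Finset.univ.filter (fun v => ¬ IsHybrid N.Arc v) := by
      apply Finset.filter_congr
      intro v _
      exact ⟨fun ht hhy => hybrid_not_tree hhy ht, fun hnh => (N.binary v).resolve_right hnh⟩
    rw [hfe, add_comm]
    rw [← Finset.card_univ]
    exact Finset.card_filter_add_card_filter_not _
  -- |T1| = h
  have hT1 : Nat.card {u : V // IsTreeNode N.Arc u ∧ HasHybridParent N.Arc u} = h := by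
    apply le_antisymm
    · rw [hh]
      apply Nat.card_le_card_of_injective
        (f := fun u : {u : V // IsTreeNode N.Arc u ∧ HasHybridParent N.Arc u} =>
          (⟨u.2.2.choose, u.2.2.choose_spec.1⟩ : {w : V // IsHybrid N.Arc w}))
      intro u1 u2 heq
      have hw : u1.2.2.choose = u2.2.2.choose := congrArg Subtype.val heq
      have h1 := u1.2.2.choose_spec
      have h2 := u2.2.2.choose_spec
      have : u1.1 = u2.1 := hybrid_child_unique h1.1 h1.2 (hw ▸ h2.2)
      exact Subtype.ext this
    · rw [hh]
      apply Nat.card_le_card_of_injective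
        (f := fun w : {w : V // IsHybrid N.Arc w} =>
          (⟨(hybrid_child N w.2).choose,
            ⟨(hybrid_child N w.2).choose_spec.2.1,
             ⟨w.1, w.2, (hybrid_child N w.2).choose_spec.1⟩⟩⟩ :
            {u : V // IsTreeNode N.Arc u ∧ HasHybridParent N.Arc u}))
      intro w1 w2 heq
      have hu : (hybrid_child N w1.2).choose = (hybrid_child N w2.2).choose :=
        congrArg Subtype.val heq
      have h1 := (hybrid_child N w1.2).choose_spec
      have h2 := (hybrid_child N w2.2).choose_spec
      exact Subtype.ext (parent_unique h1.2.1 h1.1 (hu ▸ h2.1))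
  -- card of parent-arcs-to-hybrids
  have hS : Nat.card ((w : {v : V // IsHybrid N.Arc v}) × {x : V // N.Arc x w.1}) = 2 * h := by
    rw [Nat.card_eq_fintype_card, Fintype.card_sigma]
    have : ∀ w : {v : V // IsHybrid N.Arc v},
        Fintype.card {x : V // N.Arc x w.1} = 2 := by
      intro w
      rw [← Nat.card_eq_fintype_card]
      exact w.2.1
    simp only [this, Finset.sum_const, smul_eq_mul, mul_comm, Finset.card_univ,
      ← Nat.card_eq_fintype_card, hh]
  -- |T2| = 2h
  have hT2 : Nat.card {u : V // IsTreeNode N.Arc u ∧ HasHybridSibling N.Arc u} = 2 * h := by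
    rw [← hS]
    apply le_antisymm
    · apply Nat.card_le_card_of_injective
        (f := fun u : {u : V // IsTreeNode N.Arc u ∧ HasHybridSibling N.Arc u} =>
          (⟨⟨u.2.2.choose, u.2.2.choose_spec.choose_spec.1⟩,
            ⟨u.2.2.choose_spec.choose, u.2.2.choose_spec.choose_spec.2.2.2⟩⟩ :
            (w : {v : V // IsHybrid N.Arc v}) × {x : V // N.Arc x w.1}))
      intro u1 u2 heq
      have hw : u1.2.2.choose = u2.2.2.choose := congrArg (fun s => s.1.1) heq
      have hx : (u1.2.2.choose_spec.choose : V) = u2.2.2.choose_spec.choose :=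
        congrArg (fun s : (w : {v : V // IsHybrid N.Arc v}) × {x : V // N.Arc x w.1} =>
          (s.2 : V)) heq
      have h1 := u1.2.2.choose_spec.choose_spec
      have h2 := u2.2.2.choose_spec.choose_spec
      -- h1 : IsHybrid w1 ∧ w1 ≠ u1 ∧ A x1 u1 ∧ A x1 w1
      have hout : outdeg N.Arc u1.2.2.choose_spec.choose = 2 :=
        (hybrid_parent_tree N h1.2.2.2 h1.1).2
      have hcc := card_two_elim (p := fun y => N.Arc u1.2.2.choose_spec.choose y) hout
        h1.2.2.1 h1.2.2.2 (hx ▸ h2.2.2.1) (fun hc => h1.2.1 hc.symm)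
      rcases hcc with hcc | hcc
      · exact Subtype.ext hcc.symm
      · exact absurd (hw ▸ hcc) (fun hc => h2.2.1 hc.symm)
    · apply Nat.card_le_card_of_injective
        (f := fun s : (w : {v : V // IsHybrid N.Arc v}) × {x : V // N.Arc x w.1} =>
          (⟨(N.treeChild s.2.1 (outdeg_pos s.2.2)).choose,
            ⟨(N.treeChild s.2.1 (outdeg_pos s.2.2)).choose_spec.2,
             ⟨s.1.1, s.2.1, s.1.2,
              fun he => hybrid_not_tree (he ▸ s.1.2)
                (N.treeChild s.2.1 (outdeg_pos s.2.2)).choose_spec.2,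
              (N.treeChild s.2.1 (outdeg_pos s.2.2)).choose_spec.1, s.2.2⟩⟩⟩ :
            {u : V // IsTreeNode N.Arc u ∧ HasHybridSibling N.Arc u}))
      rintro ⟨⟨w1, hw1⟩, ⟨x1, hx1⟩⟩ ⟨⟨w2, hw2⟩, ⟨x2, hx2⟩⟩ heq
      have hu : (N.treeChild x1 (outdeg_pos hx1)).choose
          = (N.treeChild x2 (outdeg_pos hx2)).choose := congrArg Subtype.val heq
      have h1 := (N.treeChild x1 (outdeg_pos hx1)).choose_spec
      have h2 := (N.treeChild x2 (outdeg_pos hx2)).choose_spec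
      have hxeq : x1 = x2 := parent_unique h1.2 h1.1 (hu ▸ h2.1)
      subst hxeq
      have hout : outdeg N.Arc x1 = 2 := (hybrid_parent_tree N hx1 hw1).2
      have hne1 : (N.treeChild x1 (outdeg_pos hx1)).choose ≠ w1 := by
        intro he
        rw [← he] at hw1
        exact hybrid_not_tree hw1 h1.2
      have hcc := card_two_elim (p := fun y => N.Arc x1 y) hout
        h1.1 hx1 hx2 hne1
      rcases hcc with hcc | hcc
      · exact absurd h1.2 (hybrid_not_tree (hcc ▸ hw2))
      · cases hcc
        rfl
  -- disjointness of hybrid-parent and hybrid-sibling among tree nodes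
  have hdisj : ∀ u : V, IsTreeNode N.Arc u → HasHybridParent N.Arc u →
      HasHybridSibling N.Arc u → False := by
    rintro u ht ⟨w, hw, hwu⟩ ⟨w', x, hw', hne, hxu, hxw'⟩
    have hxweq : x = w := parent_unique ht hxu hwu
    subst hxweq
    exact hne (hybrid_child_unique hw hxw' hwu)
  -- partition of tree nodes
  have hsplit : Nat.card {u : V // IsTreeNode N.Arc u ∧ ¬ HasHybridParent N.Arc u ∧
        ¬ HasHybridSibling N.Arc u}
      + (Nat.card {u : V // IsTreeNode N.Arc u ∧ HasHybridParent N.Arc u}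
      + Nat.card {u : V // IsTreeNode N.Arc u ∧ HasHybridSibling N.Arc u})
      = Nat.card {v : V // IsTreeNode N.Arc v} := by
    simp only [card_sub]
    have k1 := Finset.card_filter_add_card_filter_not
      (s := Finset.univ.filter (IsTreeNode N.Arc))
      (p := fun u => ¬ HasHybridParent N.Arc u ∧ ¬ HasHybridSibling N.Arc u)
    rw [Finset.filter_filter, Finset.filter_filter] at k1
    have k2 := Finset.card_filter_add_card_filter_not
      (s := Finset.univ.filter (fun u => IsTreeNode N.Arc u ∧
        ¬(¬ HasHybridParent N.Arc u ∧ ¬ HasHybridSibling N.Arc u)))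
      (p := fun u => HasHybridParent N.Arc u)
    rw [Finset.filter_filter, Finset.filter_filter] at k2
    have e4 : Finset.univ.filter (fun u => (IsTreeNode N.Arc u ∧
        ¬(¬ HasHybridParent N.Arc u ∧ ¬ HasHybridSibling N.Arc u)) ∧ HasHybridParent N.Arc u)
        = Finset.univ.filter (fun u => IsTreeNode N.Arc u ∧ HasHybridParent N.Arc u) := by
      apply Finset.filter_congr
      intro u _
      tauto
    have e5 : Finset.univ.filter (fun u => (IsTreeNode N.Arc u ∧
        ¬(¬ HasHybridParent N.Arc u ∧ ¬ HasHybridSibling N.Arc u)) ∧ ¬ HasHybridParent N.Arc u)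
        = Finset.univ.filter (fun u => IsTreeNode N.Arc u ∧ HasHybridSibling N.Arc u) := by
      apply Finset.filter_congr
      intro u _
      constructor
      · rintro ⟨⟨ht, hns⟩, hnp⟩
        refine ⟨ht, ?_⟩
        by_contra hs
        exact hns ⟨hnp, hs⟩
      · rintro ⟨ht, hs⟩
        exact ⟨⟨ht, fun hc => hc.2 hs⟩, fun hp => hdisj u ht hp hs⟩
    rw [e4, e5] at k2
    omega
  rw [hT1, hT2] at hsplit
  omega
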